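/- If a Banach space X has a basis that is tight, then X is not minimal; more precisely, no subspace of X embeds into all of its own infinite-dimensional subspaces. -/

import Mathlib

open scoped BigOperators Classical

set_option linter.unusedSectionVars false

noncomputable section

section Prelude

variable {X : Type*} [NormedAddCommGroup X] [NormedSpace ℝ X]

/-- The vector with finitely supported coefficients `c` with respect to the sequence `e`. -/
def vecOf (e : ℕ → X) (c : ℕ →₀ ℝ) : X := c.sum fun n a => a • e n

/-- `c < d` : the supports of `c` and `d` are successive. -/
def FsuppLt (c d : ℕ →₀ ℝ) : Prop := ∀ a ∈ c.support, ∀ b ∈ d.support, a < b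

/-- The Gowers–Maurey function `f(n) = log₂(n+1)`. -/
def flog (n : ℕ) : ℝ := Real.logb 2 ((n : ℝ) + 1)

/-- Support of a functional with respect to the basis `e` (via biorthogonal functionals). -/
def fsupp (e : ℕ → X) (f : X →L[ℝ] ℝ) : Set ℕ := {n | f (e n) ≠ 0}

/-- Bimonotonicity of the basis `e`, expressed on finitely supported vectors:
projections onto intervals are contractive. -/
def Bimonotone (e : ℕ → X) : Prop :=
  ∀ (c : ℕ →₀ ℝ) (a b : ℕ), ‖vecOf e (c.filter fun n => n ∈ Finset.Icc a b)‖ ≤ ‖vecOf e c‖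

/-- Lower `f`-estimate for a general function `f`. -/
def LowerEst (e : ℕ → X) (f : ℝ → ℝ) : Prop :=
  ∀ (n : ℕ) (c : Fin n → ℕ →₀ ℝ), (∀ i j : Fin n, i < j → FsuppLt (c i) (c j)) →
    (1 / f (n : ℝ)) * ∑ i, ‖vecOf e (c i)‖ ≤ ‖∑ i, vecOf e (c i)‖

/-- Lower `f`-estimate with `f(n) = log₂(n+1)`. -/
def LowerFEst (e : ℕ → X) : Prop :=
  ∀ (n : ℕ) (c : Fin n → ℕ →₀ ℝ), (∀ i j : Fin n, i < j → FsuppLt (c i) (c j)) →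
    (1 / flog n) * ∑ i, ‖vecOf e (c i)‖ ≤ ‖∑ i, vecOf e (c i)‖

/-- `Y` embeds isomorphically into `Z` (linear isomorphism onto its image). -/
def Embeds (Y Z : Type*) [NormedAddCommGroup Y] [NormedSpace ℝ Y]
    [NormedAddCommGroup Z] [NormedSpace ℝ Z] : Prop :=
  ∃ T : Y →L[ℝ] Z, ∃ c : ℝ, 0 < c ∧ ∀ y, c * ‖y‖ ≤ ‖T y‖

/-- `Y` embeds into `Z` with constant `K` (i.e. `‖T‖ ⬝ ‖T⁻¹‖ ≤ K` after normalisation). -/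
def EmbedsWithConst (K : ℝ) (Y Z : Type*) [NormedAddCommGroup Y] [NormedSpace ℝ Y]
    [NormedAddCommGroup Z] [NormedSpace ℝ Z] : Prop :=
  ∃ T : Y →L[ℝ] Z, ∀ y, ‖y‖ ≤ ‖T y‖ ∧ ‖T y‖ ≤ K * ‖y‖

/-- The closed span `[eₙ : n ∉ S]`. -/
def spanCompl (e : ℕ → X) (S : Set ℕ) : Submodule ℝ X :=
  (Submodule.span ℝ (e '' Sᶜ)).topologicalClosure

/-- `Y` is tight in the basic sequence `e`. -/
def TightIn (e : ℕ → X) (Y : Type*) [NormedAddCommGroup Y] [NormedSpace ℝ Y] : Prop :=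
  ∃ I : ℕ → Finset ℕ, (∀ i j : ℕ, i < j → ∀ a ∈ I i, ∀ b ∈ I j, a < b) ∧
    ∀ A : Set ℕ, A.Infinite → ¬ Embeds Y ↥(spanCompl e (⋃ i ∈ A, (I i : Set ℕ)))

/-- The basis `e` is tight: every infinite-dimensional Banach space is tight in it. -/
def TightBasis (e : ℕ → X) : Prop :=
  ∀ (Y : Type) [NormedAddCommGroup Y] [NormedSpace ℝ Y] [CompleteSpace Y],
    ¬ FiniteDimensional ℝ Y → TightIn e Y

end Prelude



section Helpers

variable {X : Type} [NormedAddCommGroup X] [NormedSpace ℝ X] [CompleteSpace X]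

/-- membership of generators -/
lemma mem_spanCompl_of_not_mem (e : ℕ → X) {S : Set ℕ} {n : ℕ} (hn : n ∉ S) :
    e n ∈ spanCompl e S := by
  apply Submodule.le_topologicalClosure
  exact Submodule.subset_span ⟨n, hn, rfl⟩

lemma spanCompl_antitone (e : ℕ → X) {S T : Set ℕ} (h : S ⊆ T) :
    spanCompl e T ≤ spanCompl e S := by
  apply Submodule.topologicalClosure_mono
  apply Submodule.span_mono
  exact Set.image_mono (Set.compl_subset_compl.mpr h)

/-- sup of a closed submodule with a finite-dimensional one is closed -/
lemma isClosed_sup_fd (V P : Submodule ℝ X) (hV : IsClosed (V : Set X))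
    [FiniteDimensional ℝ P] : IsClosed ((V ⊔ P : Submodule ℝ X) : Set X) := by
  haveI : IsClosed (V : Set X) := hV
  have h1 : (V ⊔ P : Submodule ℝ X) = Submodule.comap V.mkQ (Submodule.map V.mkQ P) := by
    rw [Submodule.comap_map_eq, Submodule.ker_mkQ, sup_comm]
  rw [h1]
  have h2 : IsClosed ((Submodule.map V.mkQ P : Submodule ℝ (X ⧸ V)) : Set (X ⧸ V)) := by
    haveI : FiniteDimensional ℝ (Submodule.map V.mkQ P) := Module.Finite.map P V.mkQ
    exact Submodule.closed_of_finiteDimensional _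
  have h3 : Continuous V.mkQ := continuous_quot_mk
  exact h2.preimage h3

end Helpers

section Helpers2

variable {X : Type} [NormedAddCommGroup X] [NormedSpace ℝ X] [CompleteSpace X]

/-- For finite `G`, `spanCompl e G` together with the span of `e '' G` is everything. -/
lemma spanCompl_sup_eq_top (e : ℕ → X)
    (hbasis : (Submodule.span ℝ (Set.range e)).topologicalClosure = ⊤)
    (G : Finset ℕ) :
    spanCompl e (↑G : Set ℕ) ⊔ Submodule.span ℝ (e '' (↑G : Set ℕ)) = ⊤ := by
  haveI : FiniteDimensional ℝ (Submodule.span ℝ (e '' (↑G : Set ℕ))) :=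
    FiniteDimensional.span_of_finite ℝ (G.finite_toSet.image e)
  have hclosed : IsClosed ((spanCompl e (↑G : Set ℕ) ⊔
      Submodule.span ℝ (e '' (↑G : Set ℕ)) : Submodule ℝ X) : Set X) :=
    isClosed_sup_fd _ _ (Submodule.isClosed_topologicalClosure _)
  have hle : Submodule.span ℝ (Set.range e) ≤
      spanCompl e (↑G : Set ℕ) ⊔ Submodule.span ℝ (e '' (↑G : Set ℕ)) := by
    rw [Submodule.span_le]
    rintro x ⟨n, rfl⟩
    by_cases hn : n ∈ (↑G : Set ℕ)
    · exact Submodule.mem_sup_right (Submodule.subset_span ⟨n, hn, rfl⟩)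
    · exact Submodule.mem_sup_left (mem_spanCompl_of_not_mem e hn)
  have := Submodule.topologicalClosure_minimal _ hle hclosed
  rw [hbasis] at this
  exact top_le_iff.mp this

/-- The quotient by `spanCompl e G` for finite `G` is finite dimensional. -/
lemma finiteDimensional_quotient_spanCompl (e : ℕ → X)
    (hbasis : (Submodule.span ℝ (Set.range e)).topologicalClosure = ⊤)
    (G : Finset ℕ) :
    FiniteDimensional ℝ (X ⧸ spanCompl e (↑G : Set ℕ)) := by
  set V := spanCompl e (↑G : Set ℕ)
  set P := Submodule.span ℝ (e '' (↑G : Set ℕ))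
  haveI : FiniteDimensional ℝ P := FiniteDimensional.span_of_finite ℝ (G.finite_toSet.image e)
  have hsur : Function.Surjective (V.mkQ.comp P.subtype) := by
    intro q
    obtain ⟨x, rfl⟩ := Submodule.mkQ_surjective V q
    have hx : x ∈ V ⊔ P := by rw [spanCompl_sup_eq_top e hbasis G]; trivial
    obtain ⟨v, hv, p, hp, rfl⟩ := Submodule.mem_sup.mp hx
    refine ⟨⟨p, hp⟩, ?_⟩
    simp only [LinearMap.comp_apply, Submodule.subtype_apply, Submodule.mkQ_apply]
    rw [Submodule.Quotient.mk_add, (Submodule.Quotient.mk_eq_zero V).mpr hv, zero_add]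
  exact Module.Finite.of_surjective _ hsur

end Helpers2

section Helpers3

variable {X : Type} [NormedAddCommGroup X] [NormedSpace ℝ X] [CompleteSpace X]

/-- In an infinite-dimensional subspace one can find a unit vector lying in `spanCompl e G`
(for finite `G`) and killed by finitely many functionals. -/
lemma exists_unit_vector (e : ℕ → X)
    (hbasis : (Submodule.span ℝ (Set.range e)).topologicalClosure = ⊤)
    (Z : Submodule ℝ X) (hZ : ¬ FiniteDimensional ℝ Z)
    (G : Finset ℕ) (k : ℕ) (φ : Fin k → (X →L[ℝ] ℝ)) :
    ∃ z : X, z ∈ Z ∧ z ∈ spanCompl e (↑G : Set ℕ) ∧ (∀ j : Fin k, φ j z = 0) ∧ ‖z‖ = 1 := by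
  haveI := finiteDimensional_quotient_spanCompl e hbasis G
  set V := spanCompl e (↑G : Set ℕ)
  set Φ : ↥Z →ₗ[ℝ] (X ⧸ V) × (Fin k → ℝ) :=
    LinearMap.prod (V.mkQ.comp Z.subtype)
      (LinearMap.pi fun j => ((φ j).toLinearMap).comp Z.subtype) with hΦ
  have hninj : ¬ Function.Injective Φ := by
    intro hinj
    exact hZ (FiniteDimensional.of_injective Φ hinj)
  rw [← LinearMap.ker_eq_bot] at hninj
  obtain ⟨z, hzker, hzne⟩ := Submodule.exists_mem_ne_zero_of_ne_bot hninj
  have h1 : ((z : X)) ∈ V := by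
    have := congrArg Prod.fst (congrArg (fun w => w) hzker)
    have hfst : V.mkQ (z : X) = 0 := by
      have := congrArg Prod.fst hzker
      simpa [hΦ] using this
    rwa [Submodule.mkQ_apply, Submodule.Quotient.mk_eq_zero] at hfst
  have h2 : ∀ j : Fin k, φ j (z : X) = 0 := by
    intro j
    have := congrArg (fun p => p.2 j) hzker
    simpa [hΦ] using this
  have hzX : (z : X) ≠ 0 := by
    simpa [Submodule.coe_eq_zero] using hzne
  have hnorm : ‖(z : X)‖ ≠ 0 := norm_ne_zero_iff.mpr hzX
  refine ⟨‖(z : X)‖⁻¹ • (z : X), ?_, ?_, ?_, ?_⟩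
  · exact Z.smul_mem _ z.2
  · exact V.smul_mem _ h1
  · intro j; rw [map_smul, h2 j, smul_zero]
  · rw [norm_smul, norm_inv, norm_norm, inv_mul_cancel₀ hnorm]

/-- Approximation by finitely supported combinations avoiding `S`. -/
lemma exists_approx (e : ℕ → X) {S : Set ℕ} {z : X} (hz : z ∈ spanCompl e S)
    {ε : ℝ} (hε : 0 < ε) :
    ∃ l : ℕ →₀ ℝ, (↑l.support : Set ℕ) ⊆ Sᶜ ∧
      ‖z - Finsupp.linearCombination ℝ e l‖ < ε := by
  have hz' : z ∈ closure ((Submodule.span ℝ (e '' Sᶜ) : Submodule ℝ X) : Set X) := hz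
  obtain ⟨y, hy, hdist⟩ := Metric.mem_closure_iff.mp hz' ε hε
  obtain ⟨l, hl, rfl⟩ := Finsupp.mem_span_image_iff_linearCombination ℝ |>.mp hy
  exact ⟨l, Finsupp.mem_supported ℝ l |>.mp hl, by rwa [dist_eq_norm] at hdist⟩

end Helpers3

section Helpers4

/-- Successive finite sets are pairwise disjoint. -/
lemma intervals_disjoint {I : ℕ → Finset ℕ}
    (hI : ∀ i j : ℕ, i < j → ∀ a ∈ I i, ∀ b ∈ I j, a < b) :
    ∀ i j : ℕ, i ≠ j → Disjoint (I i) (I j) := by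
  intro i j hij
  rcases lt_or_gt_of_ne hij with h | h
  · rw [Finset.disjoint_left]
    intro a ha ha'
    exact lt_irrefl a (hI i j h a ha a ha')
  · rw [Finset.disjoint_left]
    intro a ha ha'
    exact lt_irrefl a (hI j i h a ha' a ha)

/-- Only finitely many of the disjoint sets `I i` can meet a fixed finite set. -/
lemma finite_hitting {I : ℕ → Finset ℕ}
    (hI : ∀ i j : ℕ, i < j → ∀ a ∈ I i, ∀ b ∈ I j, a < b) (F : Finset ℕ) :
    {i : ℕ | ¬ Disjoint (I i) F}.Finite := by
  have hchoice : ∀ i ∈ {i : ℕ | ¬ Disjoint (I i) F}, ∃ n, n ∈ I i ∧ n ∈ F := by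
    intro i hi
    rw [Set.mem_setOf_eq, Finset.not_disjoint_iff] at hi
    exact hi
  choose f hf1 hf2 using hchoice
  apply Set.Finite.of_finite_image (f := fun i => if h : i ∈ {i : ℕ | ¬ Disjoint (I i) F} then f i h else 0)
  · apply Set.Finite.subset F.finite_toSet
    rintro x ⟨i, hi, rfl⟩
    simp only [hi, dif_pos]
    exact hf2 i hi
  · intro i hi j hj hfij
    simp only [hi, hj, dif_pos] at hfij
    by_contra hne
    have hd := intervals_disjoint hI i j hne
    rw [Finset.disjoint_left] at hd
    exact hd (hf1 i hi) (hfij ▸ hf1 j hj)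

/-- One can find an index beyond any bound whose set avoids a fixed finite set. -/
lemma exists_target {I : ℕ → Finset ℕ}
    (hI : ∀ i j : ℕ, i < j → ∀ a ∈ I i, ∀ b ∈ I j, a < b) (F : Finset ℕ) (b : ℕ) :
    ∃ t : ℕ, b < t ∧ Disjoint (I t) F := by
  have hfin : ({i : ℕ | ¬ Disjoint (I i) F} ∪ {i : ℕ | i ≤ b}).Finite :=
    (finite_hitting hI F).union (Set.finite_le_nat b)
  obtain ⟨t, ht⟩ := hfin.infinite_compl.nonempty
  rw [Set.mem_compl_iff, Set.mem_union, not_or, Set.mem_setOf_eq, Set.mem_setOf_eq,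
    not_not, not_le] at ht
  exact ⟨t, ht.2, ht.1⟩

end Helpers4

section Construction

variable {X : Type} [NormedAddCommGroup X] [NormedSpace ℝ X] [CompleteSpace X]

structure GHDatum (X : Type) [NormedAddCommGroup X] [NormedSpace ℝ X] where
  z : X
  phi : X →L[ℝ] ℝ
  psi : X →L[ℝ] ℝ
  l : ℕ →₀ ℝ
  t : ℕ

instance : Inhabited (GHDatum X) := ⟨⟨0, 0, 0, 0, 0⟩⟩

/-- The finite set of natural numbers covered by the intervals reserved before step `j`. -/
def ghG (I : ℕ → Finset ℕ) (h : ℕ → GHDatum X) (j : ℕ) : Finset ℕ :=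
  (Finset.range j).biUnion fun m => I (h m).t

/-- The invariant maintained by the gliding-hump construction. -/
def GHCond (e : ℕ → X) (I : ℕ → Finset ℕ) (Z : Submodule ℝ X)
    (h : ℕ → GHDatum X) (j : ℕ) : Prop :=
  (h j).z ∈ Z ∧ ‖(h j).z‖ = 1 ∧
  (h j).z ∈ spanCompl e (↑(ghG I h j) : Set ℕ) ∧
  (∀ m, m < j → (h m).phi ((h j).z) = 0) ∧
  ‖(h j).phi‖ = 1 ∧ ((h j).phi ((h j).z) = 1) ∧
  ((h j).psi = (h j).phi - ∑ m ∈ Finset.range j, ((h j).phi ((h m).z)) • (h m).psi) ∧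
  ((↑((h j).l).support : Set ℕ) ⊆ ((↑(ghG I h j) : Set ℕ))ᶜ) ∧
  (‖(h j).z - Finsupp.linearCombination ℝ e ((h j).l)‖ < (1/2 : ℝ)^(2*j+4)) ∧
  (∀ m, m ≤ j → Disjoint (I ((h j).t) : Finset ℕ) ((h m).l).support) ∧
  (∀ m, m < j → (h m).t < (h j).t)

lemma ghG_congr {I : ℕ → Finset ℕ} {h h' : ℕ → GHDatum X} {j : ℕ}
    (hag : ∀ m, m < j → h m = h' m) : ghG I h j = ghG I h' j := by
  apply Finset.biUnion_congr rfl
  intro m hm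
  rw [hag m (Finset.mem_range.mp hm)]

end Construction

section Construction2

variable {X : Type} [NormedAddCommGroup X] [NormedSpace ℝ X] [CompleteSpace X]

lemma ghCond_congr {e : ℕ → X} {I : ℕ → Finset ℕ} {Z : Submodule ℝ X}
    {h h' : ℕ → GHDatum X} {j : ℕ}
    (hag : ∀ m, m ≤ j → h' m = h m) (hc : GHCond e I Z h j) : GHCond e I Z h' j := by
  have hG : ghG I h' j = ghG I h j := ghG_congr (fun m hm => hag m hm.le)
  have hj : h' j = h j := hag j le_rfl
  obtain ⟨c1, c2, c3, c4, c5, c6, c7, c8, c9, c10, c11⟩ := hc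
  refine ⟨?_, ?_, ?_, ?_, ?_, ?_, ?_, ?_, ?_, ?_, ?_⟩
  · rw [hj]; exact c1
  · rw [hj]; exact c2
  · rw [hj, hG]; exact c3
  · intro m hm; rw [hj, hag m hm.le]; exact c4 m hm
  · rw [hj]; exact c5
  · rw [hj]; exact c6
  · rw [hj]
    have hsum : ∑ m ∈ Finset.range j, ((h j).phi ((h' m).z)) • (h' m).psi
        = ∑ m ∈ Finset.range j, ((h j).phi ((h m).z)) • (h m).psi :=
      Finset.sum_congr rfl (fun m hm => by rw [hag m (Finset.mem_range.mp hm).le])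
    rw [hsum]; exact c7
  · rw [hj, hG]; exact c8
  · rw [hj]; exact c9
  · intro m hm; rw [hj, hag m hm]; exact c10 m hm
  · intro m hm; rw [hj, hag m hm.le]; exact c11 m hm

end Construction2

section Construction3

variable {X : Type} [NormedAddCommGroup X] [NormedSpace ℝ X] [CompleteSpace X]

lemma ghExtend (e : ℕ → X)
    (hbasis : (Submodule.span ℝ (Set.range e)).topologicalClosure = ⊤)
    (I : ℕ → Finset ℕ)
    (hI : ∀ i j : ℕ, i < j → ∀ a ∈ I i, ∀ b ∈ I j, a < b)
    (Z : Submodule ℝ X) (hZ : ¬ FiniteDimensional ℝ Z)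
    (h : ℕ → GHDatum X) (k : ℕ) (hgood : ∀ j, j < k → GHCond e I Z h j) :
    ∃ d : GHDatum X, ∀ j, j < k + 1 → GHCond e I Z (Function.update h k d) j := by
  obtain ⟨z, hzZ, hzV, hzφ, hznorm⟩ :=
    exists_unit_vector e hbasis Z hZ (ghG I h k) k (fun j : Fin k => (h (j : ℕ)).phi)
  have hzne : z ≠ 0 := by
    intro h0; rw [h0, norm_zero] at hznorm; exact zero_ne_one hznorm
  obtain ⟨φn, hφn1, hφn2⟩ := exists_dual_vector ℝ z (norm_ne_zero_iff.mpr hzne)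
  have hφn2' : φn z = 1 := by rw [hφn2, hznorm]; norm_num
  set ψn : X →L[ℝ] ℝ := φn - ∑ m ∈ Finset.range k, (φn ((h m).z)) • (h m).psi with hψn
  obtain ⟨l, hlsupp, hlapprox⟩ := exists_approx e hzV
    (ε := (1/2 : ℝ)^(2*k+4)) (by positivity)
  set Fbig : Finset ℕ := l.support ∪ (Finset.range k).biUnion (fun m => ((h m).l).support)
    with hFbig
  set b : ℕ := (Finset.range k).sup (fun m => (h m).t) with hb
  obtain ⟨t, htb, htdisj⟩ := exists_target hI Fbig b
  refine ⟨⟨z, φn, ψn, l, t⟩, ?_⟩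
  intro j hj
  have hupd : ∀ m, m < k → Function.update h k ⟨z, φn, ψn, l, t⟩ m = h m := by
    intro m hm; exact Function.update_of_ne (Nat.ne_of_lt hm) _ _
  rcases Nat.lt_succ_iff_lt_or_eq.mp hj with hjk | hjeq
  · -- old indices: use congruence
    exact ghCond_congr (fun m hm => hupd m (lt_of_le_of_lt hm hjk)) (hgood j hjk)
  · -- the new index k
    subst hjeq
    have hk : Function.update h j ⟨z, φn, ψn, l, t⟩ j = ⟨z, φn, ψn, l, t⟩ :=
      Function.update_self _ _ _
    have hGk : ghG I (Function.update h j ⟨z, φn, ψn, l, t⟩) j = ghG I h j :=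
      (ghG_congr (fun m hm => (hupd m hm).symm)).symm
    refine ⟨?_, ?_, ?_, ?_, ?_, ?_, ?_, ?_, ?_, ?_, ?_⟩
    · rw [hk]; exact hzZ
    · rw [hk]; exact hznorm
    · rw [hk, hGk]; exact hzV
    · intro m hm; rw [hk, hupd m hm]; exact hzφ ⟨m, hm⟩
    · rw [hk]; exact hφn1
    · rw [hk]; exact hφn2'
    · rw [hk]
      have hsum : ∑ m ∈ Finset.range j,
            ((⟨z, φn, ψn, l, t⟩ : GHDatum X).phi
              ((Function.update h j ⟨z, φn, ψn, l, t⟩ m).z)) •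
              (Function.update h j ⟨z, φn, ψn, l, t⟩ m).psi
          = ∑ m ∈ Finset.range j, (φn ((h m).z)) • (h m).psi :=
        Finset.sum_congr rfl (fun m hm => by rw [hupd m (Finset.mem_range.mp hm)])
      rw [hsum]
    · rw [hk, hGk]; exact hlsupp
    · rw [hk]; exact hlapprox
    · intro m hm
      rw [hk]
      rcases Nat.lt_or_ge m j with hmj | hmj
      · rw [hupd m hmj]
        refine Finset.disjoint_of_subset_right ?_ htdisj
        refine Finset.Subset.trans ?_ Finset.subset_union_right
        exact Finset.subset_biUnion_of_mem (fun m => ((h m).l).support)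
          (Finset.mem_range.mpr hmj)
      · have : m = j := le_antisymm hm hmj
        subst this
        rw [hk]
        exact Finset.disjoint_of_subset_right Finset.subset_union_left htdisj
    · intro m hm
      rw [hk, hupd m hm]
      exact lt_of_le_of_lt (Finset.le_sup (f := fun m => (h m).t) (Finset.mem_range.mpr hm)) htb

end Construction3

section Construction4

variable {X : Type} [NormedAddCommGroup X] [NormedSpace ℝ X] [CompleteSpace X]

lemma ghSequence (e : ℕ → X)
    (hbasis : (Submodule.span ℝ (Set.range e)).topologicalClosure = ⊤)
    (I : ℕ → Finset ℕ)
    (hI : ∀ i j : ℕ, i < j → ∀ a ∈ I i, ∀ b ∈ I j, a < b)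
    (Z : Submodule ℝ X) (hZ : ¬ FiniteDimensional ℝ Z) :
    ∃ d : ℕ → GHDatum X, ∀ j, GHCond e I Z d j := by
  have ext := ghExtend e hbasis I hI Z hZ
  let hist : (k : ℕ) → {h : ℕ → GHDatum X // ∀ j, j < k → GHCond e I Z h j} := fun k =>
    Nat.rec ⟨fun _ => default, fun j hj => absurd hj (Nat.not_lt_zero j)⟩
      (fun k ih => ⟨Function.update ih.1 k (Classical.choose (ext ih.1 k ih.2)),
        Classical.choose_spec (ext ih.1 k ih.2)⟩) k
  refine ⟨fun k => (hist (k+1)).1 k, ?_⟩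
  have haga : ∀ k m, m < k → (hist k).1 m = (hist (m+1)).1 m := by
    intro k
    induction k with
    | zero => intro m hm; exact absurd hm (Nat.not_lt_zero m)
    | succ n ihn =>
      intro m hm
      have hstep : (hist (n+1)).1 = Function.update (hist n).1 n
          (Classical.choose (ext (hist n).1 n (hist n).2)) := rfl
      rcases Nat.lt_or_ge m n with hmn | hmn
      · rw [hstep, Function.update_of_ne (Nat.ne_of_lt hmn)]
        exact ihn m hmn
      · have hmeq : m = n := by omega
        subst hmeq
        rfl
  intro j
  have h1 : GHCond e I Z (hist (j+1)).1 j := (hist (j+1)).2 j (lt_add_one j)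
  exact ghCond_congr (fun m hm => (haga (j+1) m (by omega)).symm) h1

end Construction4

section Consequences

variable {X : Type} [NormedAddCommGroup X] [NormedSpace ℝ X] [CompleteSpace X]
variable {e : ℕ → X} {I : ℕ → Finset ℕ} {Z : Submodule ℝ X}

lemma ghBi {d : ℕ → GHDatum X} (hd : ∀ j, GHCond e I Z d j) :
    ∀ k j, (d k).psi ((d j).z) = if j = k then (1:ℝ) else 0 := by
  intro k
  induction k using Nat.strong_induction_on with
  | _ k IH =>
    intro j
    obtain ⟨-, -, -, -, -, c6k, c7k, -⟩ := hd k
    rw [c7k]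
    simp only [ContinuousLinearMap.sub_apply, ContinuousLinearMap.coe_sum',
      Finset.sum_apply, ContinuousLinearMap.coe_smul', Pi.smul_apply, smul_eq_mul]
    rcases lt_trichotomy j k with hjk | hjeq | hkj
    · have hsum : ∑ m ∈ Finset.range k, (d k).phi ((d m).z) * (d m).psi ((d j).z)
          = (d k).phi ((d j).z) := by
        rw [Finset.sum_eq_single j]
        · rw [IH j hjk j, if_pos rfl, mul_one]
        · intro m hm hmj
          rw [IH m (Finset.mem_range.mp hm) j, if_neg (fun hh => hmj hh.symm), mul_zero]
        · intro hj'; exact absurd (Finset.mem_range.mpr hjk) hj'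
      rw [hsum, sub_self, if_neg (Nat.ne_of_lt hjk)]
    · subst hjeq
      have hsum : ∑ m ∈ Finset.range j, (d j).phi ((d m).z) * (d m).psi ((d j).z) = 0 := by
        apply Finset.sum_eq_zero
        intro m hm
        rw [IH m (Finset.mem_range.mp hm) j,
          if_neg (Nat.ne_of_gt (Finset.mem_range.mp hm)), mul_zero]
      rw [hsum, c6k, sub_zero, if_pos rfl]
    · obtain ⟨-, -, -, c4j, -⟩ := hd j
      have hphi : (d k).phi ((d j).z) = 0 := c4j k hkj
      have hsum : ∑ m ∈ Finset.range k, (d k).phi ((d m).z) * (d m).psi ((d j).z) = 0 := by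
        apply Finset.sum_eq_zero
        intro m hm
        rw [IH m (Finset.mem_range.mp hm) j,
          if_neg (Nat.ne_of_gt (lt_trans (Finset.mem_range.mp hm) hkj)), mul_zero]
      rw [hsum, hphi, sub_zero, if_neg (Nat.ne_of_gt hkj)]

set_option maxHeartbeats 800000 in
lemma ghPsiNorm {d : ℕ → GHDatum X} (hd : ∀ j, GHCond e I Z d j) :
    ∀ k, ‖(d k).psi‖ ≤ 2 ^ k := by
  intro k
  induction k using Nat.strong_induction_on with
  | _ k IH =>
    obtain ⟨-, -, -, -, c5k, -, c7k, -⟩ := hd k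
    rw [c7k]
    have h1 : ‖∑ m ∈ Finset.range k, ((d k).phi ((d m).z)) • (d m).psi‖
        ≤ ∑ m ∈ Finset.range k, (2:ℝ) ^ m := by
      refine le_trans (norm_sum_le _ _) (Finset.sum_le_sum ?_)
      intro m hm
      have hzm : ‖(d m).z‖ = 1 := (hd m).2.1
      have hb : ‖(d k).phi ((d m).z)‖ ≤ 1 := by
        calc ‖(d k).phi ((d m).z)‖ ≤ ‖(d k).phi‖ * ‖(d m).z‖ := (d k).phi.le_opNorm _
        _ = 1 := by rw [c5k, hzm, one_mul]
      have hns : ‖((d k).phi ((d m).z)) • (d m).psi‖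
          = ‖(d k).phi ((d m).z)‖ * ‖(d m).psi‖ := norm_smul ((d k).phi ((d m).z)) ((d m).psi)
      rw [hns]
      calc ‖(d k).phi ((d m).z)‖ * ‖(d m).psi‖
          ≤ 1 * (2:ℝ)^m :=
            mul_le_mul hb (IH m (Finset.mem_range.mp hm)) (norm_nonneg _) zero_le_one
        _ = (2:ℝ)^m := one_mul _
    have h2 : ∑ m ∈ Finset.range k, (2:ℝ) ^ m = 2 ^ k - 1 := by
      rw [geom_sum_eq (by norm_num)]
      ring
    calc ‖(d k).phi - ∑ m ∈ Finset.range k, ((d k).phi ((d m).z)) • (d m).psi‖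
        ≤ ‖(d k).phi‖ + ‖∑ m ∈ Finset.range k, ((d k).phi ((d m).z)) • (d m).psi‖ :=
          norm_sub_le _ _
      _ ≤ 1 + (2 ^ k - 1) := by rw [c5k]; linarith [h1, h2 ▸ h1]
      _ = 2 ^ k := by ring

end Consequences

section Assembly

variable {X : Type} [NormedAddCommGroup X] [NormedSpace ℝ X] [CompleteSpace X]
variable {e : ℕ → X} {I : ℕ → Finset ℕ} {Z : Submodule ℝ X}

lemma ghT_infinite {d : ℕ → GHDatum X} (hd : ∀ j, GHCond e I Z d j) :
    (Set.range (fun k => (d k).t)).Infinite := by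
  have hstrict : StrictMono (fun k => (d k).t) := fun a b hab =>
    (hd b).2.2.2.2.2.2.2.2.2.2 a hab
  exact Set.infinite_range_of_injective hstrict.injective

lemma ghv_mem {d : ℕ → GHDatum X} (hd : ∀ j, GHCond e I Z d j) (k : ℕ) :
    Finsupp.linearCombination ℝ e ((d k).l) ∈
      spanCompl e (⋃ i ∈ Set.range (fun k => (d k).t), ((I i : Finset ℕ) : Set ℕ)) := by
  set S := ⋃ i ∈ Set.range (fun k => (d k).t), ((I i : Finset ℕ) : Set ℕ) with hS
  have hsupp : (↑((d k).l).support : Set ℕ) ⊆ Sᶜ := by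
    intro n hn hnS
    rw [hS] at hnS
    simp only [Set.mem_iUnion, Set.mem_range, exists_prop, Finset.mem_coe] at hnS
    obtain ⟨i, ⟨j, rfl⟩, hni⟩ := hnS
    rcases Nat.lt_or_ge j k with hjk | hjk
    · have c8 := (hd k).2.2.2.2.2.2.2.1
      have : n ∈ (↑(ghG I d k) : Set ℕ) := by
        simp only [ghG, Finset.coe_biUnion, Set.mem_iUnion, Finset.mem_coe]
        exact ⟨j, Finset.mem_coe.mpr (Finset.mem_range.mpr hjk), hni⟩
      exact (c8 hn) this
    · have c10 := (hd j).2.2.2.2.2.2.2.2.2.1 k hjk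
      rw [Finset.disjoint_right] at c10
      exact c10 hn hni
  apply Submodule.le_topologicalClosure
  apply Finsupp.mem_span_image_iff_linearCombination ℝ |>.mpr
  exact ⟨(d k).l, (Finsupp.mem_supported ℝ _).mpr hsupp, rfl⟩

end Assembly

section Operator

variable {X : Type} [NormedAddCommGroup X] [NormedSpace ℝ X] [CompleteSpace X]
variable {e : ℕ → X} {I : ℕ → Finset ℕ} {Z : Submodule ℝ X}

lemma ghOperator {d : ℕ → GHDatum X} (hd : ∀ j, GHCond e I Z d j) :
    ∃ T : X →L[ℝ] X, (∀ x, (1/2 : ℝ) * ‖x‖ ≤ ‖T x‖) ∧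
      (∀ k, T ((d k).z) = Finsupp.linearCombination ℝ e ((d k).l)) := by
  set g : ℕ → (X →L[ℝ] X) := fun k =>
    ((d k).psi).smulRight (Finsupp.linearCombination ℝ e ((d k).l) - (d k).z) with hg
  have hgnorm : ∀ k, ‖g k‖ ≤ (1/2 : ℝ)^(k+4) := by
    intro k
    have h9 := (hd k).2.2.2.2.2.2.2.2.1
    have h1 : ‖g k‖ = ‖(d k).psi‖ * ‖Finsupp.linearCombination ℝ e ((d k).l) - (d k).z‖ :=
      ContinuousLinearMap.norm_smulRight_apply _ _
    have h2 : ‖Finsupp.linearCombination ℝ e ((d k).l) - (d k).z‖ ≤ (1/2 : ℝ)^(2*k+4) := by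
      rw [norm_sub_rev]; exact le_of_lt h9
    rw [h1]
    calc ‖(d k).psi‖ * ‖Finsupp.linearCombination ℝ e ((d k).l) - (d k).z‖
        ≤ 2^k * (1/2 : ℝ)^(2*k+4) :=
          mul_le_mul (ghPsiNorm hd k) h2 (norm_nonneg _) (by positivity)
      _ = (1/2 : ℝ)^(k+4) := by
          rw [show 2*k+4 = k+(k+4) by ring, pow_add, ← mul_assoc, ← mul_pow]
          norm_num
  have hsumgeo : Summable (fun k => (1/2 : ℝ)^(k+4)) := by
    have h := (summable_geometric_of_lt_one (by norm_num : (0:ℝ) ≤ 1/2)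
      (by norm_num : (1/2 : ℝ) < 1)).mul_right ((1/2 : ℝ)^4)
    exact h.congr (fun k => (pow_add (1/2 : ℝ) k 4).symm)
  have hnorms : Summable (fun k => ‖g k‖) :=
    Summable.of_nonneg_of_le (fun k => norm_nonneg _) hgnorm hsumgeo
  have hgsum : Summable g := Summable.of_norm hnorms
  set K : X →L[ℝ] X := ∑' k, g k with hK
  have hKnorm : ‖K‖ ≤ 1/8 := by
    have h3 : ‖K‖ ≤ ∑' k, ‖g k‖ := norm_tsum_le_tsum_norm hnorms
    have h4 : ∑' k, ‖g k‖ ≤ ∑' k, (1/2 : ℝ)^(k+4) := Summable.tsum_le_tsum hgnorm hnorms hsumgeo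
    have h5 : ∑' k, (1/2 : ℝ)^(k+4) = 1/8 := by
      calc ∑' k, (1/2 : ℝ)^(k+4) = ∑' k, (1/2 : ℝ)^k * (1/2 : ℝ)^4 := by
            congr 1; funext k; rw [pow_add]
        _ = (∑' k, (1/2 : ℝ)^k) * (1/2 : ℝ)^4 := tsum_mul_right
        _ = (1 - 1/2 : ℝ)⁻¹ * (1/2 : ℝ)^4 := by
            rw [tsum_geometric_of_lt_one (by norm_num) (by norm_num)]
        _ = 1/8 := by norm_num
    linarith
  have hKz : ∀ j, K ((d j).z) = Finsupp.linearCombination ℝ e ((d j).l) - (d j).z := by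
    intro j
    have happly : K ((d j).z) = ∑' k, g k ((d j).z) := by
      have := ContinuousLinearMap.map_tsum
        (ContinuousLinearMap.apply ℝ X ((d j).z)) hgsum
      simpa using this
    rw [happly]
    rw [tsum_eq_single j ?_]
    · rw [hg]
      simp only [ContinuousLinearMap.smulRight_apply]
      rw [ghBi hd j j, if_pos rfl, one_smul]
    · intro k hkj
      simp only [hg, ContinuousLinearMap.smulRight_apply]
      rw [ghBi hd k j, if_neg (fun hh => hkj hh.symm), zero_smul]
  refine ⟨ContinuousLinearMap.id ℝ X + K, ?_, ?_⟩
  · intro x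
    have h1 : (ContinuousLinearMap.id ℝ X + K) x = x + K x := rfl
    have h2 : ‖K x‖ ≤ (1/8 : ℝ) * ‖x‖ := by
      calc ‖K x‖ ≤ ‖K‖ * ‖x‖ := K.le_opNorm x
        _ ≤ (1/8 : ℝ) * ‖x‖ := mul_le_mul_of_nonneg_right hKnorm (norm_nonneg x)
    have h3 : ‖x‖ ≤ ‖x + K x‖ + ‖K x‖ := by
      have hxeq : x = (x + K x) - K x := by abel
      calc ‖x‖ = ‖(x + K x) - K x‖ := by rw [← hxeq]
        _ ≤ ‖x + K x‖ + ‖K x‖ := norm_sub_le _ _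
    rw [h1]
    linarith [norm_nonneg x]
  · intro k
    have h1 : (ContinuousLinearMap.id ℝ X + K) ((d k).z) = (d k).z + K ((d k).z) := rfl
    rw [h1, hKz k]
    abel

end Operator

section Indep

variable {X : Type} [NormedAddCommGroup X] [NormedSpace ℝ X] [CompleteSpace X]
variable {e : ℕ → X} {I : ℕ → Finset ℕ} {Z : Submodule ℝ X}

lemma ghIndep {d : ℕ → GHDatum X} (hd : ∀ j, GHCond e I Z d j) :
    LinearIndependent ℝ (fun k => (d k).z) := by
  rw [linearIndependent_iff]
  intro l hl
  ext j
  have h0 := congrArg ((d j).psi) hl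
  rw [map_zero] at h0
  rw [Finsupp.linearCombination_apply, map_finsuppSum] at h0
  have hterm : ∀ k a, (d j).psi (a • (d k).z) = if k = j then a else 0 := by
    intro k a
    rw [map_smul, ghBi hd j k, smul_eq_mul]
    split
    · rw [mul_one]
    · rw [mul_zero]
  have hs : (l.sum fun k a => (d j).psi (a • (d k).z))
      = l.sum (fun k a => if k = j then a else 0) :=
    Finsupp.sum_congr (fun k _ => hterm k (l k))
  rw [hs, Finsupp.sum_ite_eq' l j (fun _ a => a)] at h0
  by_cases hj : j ∈ l.support
  · rw [if_pos hj] at h0; exact h0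
  · exact Finsupp.notMem_support_iff.mp hj

end Indep

/-- a space with a tight basis is not minimal; no subspace of it embeds
into all of its own infinite-dimensional subspaces. -/
theorem stmt3 {X : Type} [NormedAddCommGroup X] [NormedSpace ℝ X] [CompleteSpace X]
    (e : ℕ → X)
    (hbasis : (Submodule.span ℝ (Set.range e)).topologicalClosure = ⊤)
    (htight : TightBasis e)
    (Z : Submodule ℝ X) (hZc : IsClosed (Z : Set X)) (hZ : ¬ FiniteDimensional ℝ Z) :
    ∃ W : Submodule ℝ Z, IsClosed (W : Set Z) ∧ ¬ FiniteDimensional ℝ W ∧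
      ¬ Embeds ↥Z ↥W := by
  by_contra hcon
  push_neg at hcon
  haveI : CompleteSpace ↥Z := hZc.completeSpace_coe
  obtain ⟨I, hI, hA⟩ := htight ↥Z hZ
  obtain ⟨d, hd⟩ := ghSequence e hbasis I hI Z hZ
  obtain ⟨T, hTlow, hTz⟩ := ghOperator hd
  set A : Set ℕ := Set.range (fun k => (d k).t) with hA'
  set M : Submodule ℝ X := spanCompl e (⋃ i ∈ A, ((I i : Finset ℕ) : Set ℕ)) with hM
  set Wx : Submodule ℝ X :=
    (Submodule.span ℝ (Set.range (fun k => (d k).z))).topologicalClosure with hWx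
  have hWZ : Wx ≤ Z := by
    apply Submodule.topologicalClosure_minimal
    · rw [Submodule.span_le]; rintro x ⟨k, rfl⟩; exact (hd k).1
    · exact hZc
  have hTW : ∀ x ∈ Wx, T x ∈ M := by
    have hspan : ∀ x ∈ Submodule.span ℝ (Set.range (fun k => (d k).z)), T x ∈ M := by
      intro x hx
      induction hx using Submodule.span_induction with
      | mem y hy =>
        obtain ⟨k, rfl⟩ := hy
        rw [hTz k]
        exact ghv_mem hd k
      | zero => rw [map_zero]; exact M.zero_mem
      | add a b _ _ ha hb => rw [map_add]; exact M.add_mem ha hb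
      | smul c a _ ha => rw [map_smul]; exact M.smul_mem c ha
    intro x hx
    have hx' : x ∈ closure ((Submodule.span ℝ (Set.range fun k => (d k).z) : Submodule ℝ X)
        : Set X) := hx
    have h2 : T x ∈ closure (T '' ((Submodule.span ℝ (Set.range fun k => (d k).z)
        : Submodule ℝ X) : Set X)) :=
      image_closure_subset_closure_image T.continuous ⟨x, hx', rfl⟩
    have h1 : T '' ((Submodule.span ℝ (Set.range fun k => (d k).z) : Submodule ℝ X) : Set X)
        ⊆ (M : Set X) := by
      rintro y ⟨w, hw, rfl⟩; exact hspan w hw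
    have h4 : closure (M : Set X) = (M : Set X) :=
      IsClosed.closure_eq (Submodule.isClosed_topologicalClosure _)
    have h5 := closure_mono h1 h2
    rw [h4] at h5
    exact h5
  have hWxfd : ¬ FiniteDimensional ℝ ↥Wx := by
    intro hfd
    have hmem : ∀ k, (d k).z ∈ Wx := fun k =>
      (Submodule.le_topologicalClosure _) (Submodule.subset_span ⟨k, rfl⟩)
    have hzW : LinearIndependent ℝ (fun k => (⟨(d k).z, hmem k⟩ : ↥Wx)) := by
      apply LinearIndependent.of_comp Wx.subtype
      have hco : (⇑Wx.subtype ∘ fun k => (⟨(d k).z, hmem k⟩ : ↥Wx)) = fun k => (d k).z := rfl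
      rw [hco]; exact ghIndep hd
    haveI := hfd
    haveI := hzW.finite
    exact not_finite ℕ
  set W : Submodule ℝ ↥Z := Wx.comap Z.subtype with hW
  have hWclosed : IsClosed (W : Set ↥Z) := by
    have hWset : (W : Set ↥Z) = (Z.subtype) ⁻¹' (Wx : Set X) := rfl
    rw [hWset]
    exact (Submodule.isClosed_topologicalClosure _).preimage continuous_subtype_val
  have hWfd : ¬ FiniteDimensional ℝ ↥W := by
    intro hfd
    haveI := hfd
    exact hWxfd (Submodule.comapSubtypeEquivOfLe hWZ).finiteDimensional
  obtain ⟨T₁, c₁, hc₁, hT₁⟩ := hcon W hWclosed hWfd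
  have hmemM : ∀ w : ↥W, T (((w : ↥Z) : X)) ∈ M := fun w => hTW _ w.2
  set Jlin : ↥W →ₗ[ℝ] ↥M :=
    { toFun := fun w => ⟨T ((w : ↥Z) : X), hmemM w⟩,
      map_add' := by intro a b; ext; simp,
      map_smul' := by intro a b; ext; simp } with hJlin
  have hJcont : ∀ w : ↥W, ‖Jlin w‖ ≤ ‖T‖ * ‖w‖ := by
    intro w
    have h6 : ‖Jlin w‖ = ‖T ((w : ↥Z) : X)‖ := rfl
    have hwn : ‖w‖ = ‖((w : ↥Z) : X)‖ := rfl
    rw [h6, hwn]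
    exact T.le_opNorm _
  set J : ↥W →L[ℝ] ↥M := Jlin.mkContinuous ‖T‖ hJcont with hJ
  have hemb : Embeds ↥Z ↥M := by
    refine ⟨J.comp T₁, (1/2) * c₁, by positivity, ?_⟩
    intro y
    have h1 : ‖(J.comp T₁) y‖ = ‖T (((T₁ y : ↥W) : ↥Z) : X)‖ := rfl
    have h2 : (1/2 : ℝ) * ‖(((T₁ y : ↥W) : ↥Z) : X)‖ ≤ ‖T (((T₁ y : ↥W) : ↥Z) : X)‖ :=
      hTlow _
    have h3 : ‖(T₁ y : ↥W)‖ = ‖(((T₁ y : ↥W) : ↥Z) : X)‖ := rfl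
    have h4 : c₁ * ‖y‖ ≤ ‖T₁ y‖ := hT₁ y
    rw [h1]
    calc (1/2) * c₁ * ‖y‖ = (1/2) * (c₁ * ‖y‖) := by ring
      _ ≤ (1/2) * ‖T₁ y‖ := by linarith
      _ = (1/2) * ‖(((T₁ y : ↥W) : ↥Z) : X)‖ := by rw [← h3]
      _ ≤ ‖T (((T₁ y : ↥W) : ↥Z) : X)‖ := h2
  exact hA A (ghT_infinite hd) hemb
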